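/- Let X be a real Banach space with property β. Then NRA(X) ∩ K(X) is dense in K(X) with respect to the operator norm. -/

import Mathlib

universe u

/-- The numerical radius of a bounded linear operator `T` on a real Banach space `X`. -/
noncomputable def numRadius {X : Type*} [NormedAddCommGroup X] [NormedSpace ℝ X]
    (T : X →L[ℝ] X) : ℝ :=
  sSup {r : ℝ | ∃ (x : X) (f : X →L[ℝ] ℝ), ‖x‖ = 1 ∧ ‖f‖ = 1 ∧ f x = 1 ∧ r = |f (T x)|}

/-- `T` attains its numerical radius. -/
def AttainsNumRadius {X : Type*} [NormedAddCommGroup X] [NormedSpace ℝ X]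
    (T : X →L[ℝ] X) : Prop :=
  ∃ (x : X) (f : X →L[ℝ] ℝ), ‖x‖ = 1 ∧ ‖f‖ = 1 ∧ f x = 1 ∧ |f (T x)| = numRadius T

/-- A real Banach space `X` has property β: there are norming families
`{x_i} ⊆ S_X`, `{x_i*} ⊆ S_{X*}` with `x_i*(x_i) = 1`, `|x_i*(x_j)| ≤ ρ < 1` for `i ≠ j`,
and the closed unit ball of `X*` is the weak*-closed absolutely convex hull of
`{x_i*}`. -/
def PropertyBeta (X : Type u) [NormedAddCommGroup X] [NormedSpace ℝ X] : Prop :=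
  ∃ (ι : Type u) (x : ι → X) (xstar : ι → StrongDual ℝ X) (ρ : ℝ),
    0 ≤ ρ ∧ ρ < 1 ∧
    (∀ i, ‖x i‖ = 1) ∧ (∀ i, ‖xstar i‖ = 1) ∧
    (∀ i, xstar i (x i) = 1) ∧
    (∀ i j, i ≠ j → |xstar i (x j)| ≤ ρ) ∧
    (⇑StrongDual.toWeakDual '' Metric.closedBall (0 : StrongDual ℝ X) 1 =
      closure (convexHull ℝ
        (Set.range (fun i => StrongDual.toWeakDual (xstar i)) ∪
          -(Set.range (fun i => StrongDual.toWeakDual (xstar i))))))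

open NormedSpace Set Pointwise

variable {X : Type*} [NormedAddCommGroup X] [NormedSpace ℝ X]

section
variable {ι : Type*} {x : ι → X} {xs : ι → StrongDual ℝ X}

lemma aux_hull
    (hball : ⇑StrongDual.toWeakDual '' Metric.closedBall (0 : StrongDual ℝ X) 1 =
      closure (convexHull ℝ
        (Set.range (fun i => StrongDual.toWeakDual (xs i)) ∪
          -(Set.range (fun i => StrongDual.toWeakDual (xs i))))))
    (f : StrongDual ℝ X) (hf : ‖f‖ ≤ 1) (y₁ y₂ : X) (c₁ c₂ B : ℝ)
    (hgen : ∀ (j : ι) (s : ℝ), s = 1 ∨ s = -1 →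
      c₁ * (s * xs j y₁) + c₂ * (s * xs j y₂) ≤ B) :
    c₁ * f y₁ + c₂ * f y₂ ≤ B := by
  have hmem : StrongDual.toWeakDual f ∈ closure (convexHull ℝ
      (Set.range (fun i => StrongDual.toWeakDual (xs i)) ∪
        -(Set.range (fun i => StrongDual.toWeakDual (xs i))))) := by
    rw [← hball]
    exact ⟨f, by simpa [Metric.mem_closedBall] using hf, rfl⟩
  set D : Set (WeakDual ℝ X) := {g | c₁ * g y₁ + c₂ * g y₂ ≤ B} with hD
  have hcont : Continuous fun g : WeakDual ℝ X => c₁ * g y₁ + c₂ * g y₂ :=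
    ((continuous_const.mul (WeakDual.eval_continuous y₁)).add
      (continuous_const.mul (WeakDual.eval_continuous y₂)))
  have hDclosed : IsClosed D := isClosed_le hcont continuous_const
  have hDconvex : Convex ℝ D := by
    intro g₁ hg₁ g₂ hg₂ a b ha hb hab
    simp only [hD, Set.mem_setOf_eq] at hg₁ hg₂ ⊢
    have e₁ : (a • g₁ + b • g₂) y₁ = a * g₁ y₁ + b * g₂ y₁ := rfl
    have e₂ : (a • g₁ + b • g₂) y₂ = a * g₁ y₂ + b * g₂ y₂ := rfl
    rw [e₁, e₂]
    calc c₁ * (a * g₁ y₁ + b * g₂ y₁) + c₂ * (a * g₁ y₂ + b * g₂ y₂)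
        = a * (c₁ * g₁ y₁ + c₂ * g₁ y₂) + b * (c₁ * g₂ y₁ + c₂ * g₂ y₂) := by ring
      _ ≤ a * B + b * B :=
        add_le_add (mul_le_mul_of_nonneg_left hg₁ ha) (mul_le_mul_of_nonneg_left hg₂ hb)
      _ = B := by rw [← add_mul, hab, one_mul]
  have hsub : (Set.range (fun i => StrongDual.toWeakDual (xs i)) ∪
        -(Set.range (fun i => StrongDual.toWeakDual (xs i)))) ⊆ D := by
    rintro g (⟨j, rfl⟩ | hg)
    · have := hgen j 1 (Or.inl rfl)
      simpa [hD] using this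
    · obtain ⟨j, hj⟩ := hg
      have hj' : StrongDual.toWeakDual (xs j) = -g := hj
      have hgeq : g = -(StrongDual.toWeakDual (xs j)) := by
        rw [hj', neg_neg]
      subst hgeq
      have := hgen j (-1) (Or.inr rfl)
      have e₁ : (-(StrongDual.toWeakDual (xs j))) y₁ = -(xs j y₁) := rfl
      have e₂ : (-(StrongDual.toWeakDual (xs j))) y₂ = -(xs j y₂) := rfl
      simp only [hD, Set.mem_setOf_eq, e₁, e₂]
      nlinarith [this]
  have : StrongDual.toWeakDual f ∈ D :=
    closure_minimal (convexHull_min hsub hDconvex) hDclosed hmem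
  exact this

lemma aux_norming
    (hball : ⇑StrongDual.toWeakDual '' Metric.closedBall (0 : StrongDual ℝ X) 1 =
      closure (convexHull ℝ
        (Set.range (fun i => StrongDual.toWeakDual (xs i)) ∪
          -(Set.range (fun i => StrongDual.toWeakDual (xs i))))))
    (z : X) (c : ℝ) (hc : 0 ≤ c) (hj : ∀ j, |xs j z| ≤ c) : ‖z‖ ≤ c := by
  rcases eq_or_ne z 0 with rfl | hz
  · simpa using hc
  · obtain ⟨g, hg1, hgz⟩ := exists_dual_vector ℝ z (norm_ne_zero_iff.mpr hz)
    have hb := aux_hull hball g (le_of_eq hg1) z 0 1 0 c (by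
      rintro j s (rfl | rfl) <;>
      · have h2 := abs_le.mp (hj j)
        simp only [map_zero, mul_zero, add_zero, one_mul, neg_mul, neg_one_mul]
        linarith [h2.1, h2.2])
    have hgz' : g z = ‖z‖ := by
      simpa using hgz
    rw [map_zero] at hb
    rw [← hgz']
    linarith

lemma aux_pair_bound
    (hball : ⇑StrongDual.toWeakDual '' Metric.closedBall (0 : StrongDual ℝ X) 1 =
      closure (convexHull ℝ
        (Set.range (fun i => StrongDual.toWeakDual (xs i)) ∪
          -(Set.range (fun i => StrongDual.toWeakDual (xs i))))))
    (hxs : ∀ j, ‖xs j‖ = 1)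
    (A : X →L[ℝ] X) (z : X) (f : StrongDual ℝ X)
    (hz : ‖z‖ = 1) (hf : ‖f‖ = 1) (hfz : f z = 1) {η : ℝ} (hη : 0 < η) :
    ∃ j, 1 - η ≤ |xs j z| ∧ |f (A z)| - η ≤ |xs j (A z)| := by
  have habsz : ∀ j, |xs j z| ≤ 1 := by
    intro j
    calc |xs j z| ≤ ‖xs j‖ * ‖z‖ := (xs j).le_opNorm _
      _ = 1 := by rw [hxs j, hz, one_mul]
  have habsA : ∀ j, |xs j (A z)| ≤ ‖A‖ := by
    intro j
    calc |xs j (A z)| ≤ ‖xs j‖ * ‖A z‖ := (xs j).le_opNorm _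
      _ = ‖A z‖ := by rw [hxs j, one_mul]
      _ ≤ ‖A‖ * ‖z‖ := A.le_opNorm _
      _ = ‖A‖ := by rw [hz, mul_one]
  have hgood : ∃ j, 1 - η ≤ |xs j z| := by
    by_contra hcon
    push_neg at hcon
    have h1 := aux_hull hball f (le_of_eq hf) z z 1 0 (1 - η) (by
      rintro j s (rfl | rfl) <;>
      · have h2 := abs_le.mp (hcon j).le
        nlinarith [h2.1, h2.2])
    rw [hfz] at h1
    linarith
  set R : Set ℝ := {t | ∃ j, 1 - η ≤ |xs j z| ∧ t = |xs j (A z)|} with hRdef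
  obtain ⟨j₀, hj₀⟩ := hgood
  have hRne : R.Nonempty := ⟨|xs j₀ (A z)|, j₀, hj₀, rfl⟩
  have hRbdd : BddAbove R := by
    refine ⟨‖A‖, ?_⟩
    rintro t ⟨j, hjg, rfl⟩
    exact habsA j
  set r : ℝ := sSup R with hrdef
  have hr0 : 0 ≤ r := le_trans (abs_nonneg _) (le_csSup hRbdd ⟨j₀, hj₀, rfl⟩)
  have hAη : 0 ≤ ‖A‖ / η := div_nonneg (norm_nonneg _) hη.le
  have key : ∀ c₂ : ℝ, c₂ = 1 ∨ c₂ = -1 →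
      ‖A‖ / η * f z + c₂ * f (A z) ≤ r + ‖A‖ / η := by
    intro c₂ hc₂
    apply aux_hull hball f (le_of_eq hf) z (A z) (‖A‖/η) c₂ (r + ‖A‖/η)
    rintro j s hs
    have hsz : s * xs j z ≤ |xs j z| := by
      rcases hs with rfl | rfl
      · rw [one_mul]; exact le_abs_self _
      · rw [neg_one_mul]; exact neg_le_abs _
    have hsA : c₂ * (s * xs j (A z)) ≤ |xs j (A z)| := by
      have h1 : |c₂ * (s * xs j (A z))| = |xs j (A z)| := by
        rcases hs with rfl | rfl <;> rcases hc₂ with rfl | rfl <;>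
          simp [abs_mul]
      rw [← h1]; exact le_abs_self _
    by_cases hgj : 1 - η ≤ |xs j z|
    · have h3 : |xs j (A z)| ≤ r := le_csSup hRbdd ⟨j, hgj, rfl⟩
      have h4 : ‖A‖ / η * (s * xs j z) ≤ ‖A‖ / η * 1 :=
        mul_le_mul_of_nonneg_left (le_trans hsz (habsz j)) hAη
      linarith
    · push_neg at hgj
      have h3 : ‖A‖ / η * (s * xs j z) ≤ ‖A‖ / η * (1 - η) :=
        mul_le_mul_of_nonneg_left (le_trans hsz hgj.le) hAη
      have h4 : ‖A‖ / η * (1 - η) = ‖A‖ / η - ‖A‖ := by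
        field_simp
      have h5 := le_trans hsA (habsA j)
      linarith
  have k1 := key 1 (Or.inl rfl)
  have k2 := key (-1) (Or.inr rfl)
  rw [hfz, mul_one] at k1 k2
  have habsf : |f (A z)| ≤ r := by
    rw [abs_le]; constructor <;> linarith
  have hlt : r - η < r := by linarith
  obtain ⟨t, htR, ht⟩ := exists_lt_of_lt_csSup hRne hlt
  obtain ⟨j, hjg, rfl⟩ := htR
  exact ⟨j, hjg, by linarith⟩

lemma aux_face {ρ : ℝ} (hρ0 : 0 ≤ ρ) (hρ1 : ρ < 1)
    (hball : ⇑StrongDual.toWeakDual '' Metric.closedBall (0 : StrongDual ℝ X) 1 =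
      closure (convexHull ℝ
        (Set.range (fun i => StrongDual.toWeakDual (xs i)) ∪
          -(Set.range (fun i => StrongDual.toWeakDual (xs i))))))
    (hx : ∀ i, ‖x i‖ = 1) (hxs : ∀ i, ‖xs i‖ = 1)
    (hxx : ∀ i, xs i (x i) = 1) (hsep : ∀ i j, i ≠ j → |xs i (x j)| ≤ ρ)
    (i : ι) (u : X) {η : ℝ} (hη : 0 ≤ η) (hu : ‖u‖ ≤ 1) (hiu : 1 - η ≤ xs i u) :
    ∃ p : X, ‖p‖ = 1 ∧ xs i p = 1 ∧ ‖p - u‖ ≤ (1 + ρ) / (1 - ρ) * η := by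
  have h1ρ : (0:ℝ) < 1 - ρ := by linarith
  set a : ℝ := xs i u with ha
  have ha1 : a ≤ 1 := by
    have h1 : |xs i u| ≤ 1 := by
      calc |xs i u| ≤ ‖xs i‖ * ‖u‖ := (xs i).le_opNorm _
        _ ≤ 1 := by rw [hxs i, one_mul]; exact hu
    exact le_trans (le_abs_self _) h1
  set c : ℝ := ρ * (1 - a) / (1 - ρ) with hc
  have hc0 : 0 ≤ c := div_nonneg (mul_nonneg hρ0 (by linarith)) h1ρ.le
  have hcρ : (1 - a + c) * ρ = c := by
    rw [hc]; field_simp; ring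
  have hcη : c ≤ ρ * η / (1 - ρ) := by
    rw [hc]
    gcongr
    linarith
  have h1ac : 0 ≤ 1 - a + c := by linarith
  set q : X := u + (1 - a + c) • x i with hq
  have hqi : xs i q = 1 + c := by
    rw [hq, map_add, map_smul, smul_eq_mul, hxx i, ← ha]; ring
  have hqj : ∀ j, |xs j q| ≤ 1 + c := by
    intro j
    rcases eq_or_ne j i with rfl | hji
    · rw [hqi, abs_of_nonneg (by linarith)]
    · have hje : xs j q = xs j u + (1 - a + c) * xs j (x i) := by
        rw [hq, map_add, map_smul, smul_eq_mul]
      have h1 : |xs j u| ≤ 1 := by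
        calc |xs j u| ≤ ‖xs j‖ * ‖u‖ := (xs j).le_opNorm _
          _ ≤ 1 := by rw [hxs j, one_mul]; exact hu
      have h2 : |xs j (x i)| ≤ ρ := hsep j i hji
      calc |xs j q| ≤ |xs j u| + |(1 - a + c) * xs j (x i)| := by
            rw [hje]; exact abs_add_le _ _
        _ ≤ 1 + (1 - a + c) * ρ := by
            rw [abs_mul, abs_of_nonneg h1ac]
            exact add_le_add h1 (mul_le_mul_of_nonneg_left h2 h1ac)
        _ = 1 + c := by rw [hcρ]
  have hqn : ‖q‖ ≤ 1 + c := aux_norming hball q (1 + c) (by linarith) hqj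
  have h1c : (0:ℝ) < 1 + c := by linarith
  set p : X := (1 + c)⁻¹ • q with hp
  have hip : xs i p = 1 := by
    rw [hp, map_smul, smul_eq_mul, hqi]
    field_simp
  have hpn1 : ‖p‖ ≤ 1 := by
    rw [hp, norm_smul, Real.norm_eq_abs, abs_of_pos (inv_pos.mpr h1c)]
    calc (1 + c)⁻¹ * ‖q‖ ≤ (1 + c)⁻¹ * (1 + c) :=
          mul_le_mul_of_nonneg_left hqn (inv_pos.mpr h1c).le
      _ = 1 := inv_mul_cancel₀ (ne_of_gt h1c)
  have hpn : ‖p‖ = 1 := by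
    refine le_antisymm hpn1 ?_
    have h1 : (1:ℝ) = xs i p := hip.symm
    calc (1:ℝ) = xs i p := h1
      _ ≤ |xs i p| := le_abs_self _
      _ ≤ ‖xs i‖ * ‖p‖ := (xs i).le_opNorm _
      _ = ‖p‖ := by rw [hxs i, one_mul]
  refine ⟨p, hpn, hip, ?_⟩
  have heq : p - u = (1 + c)⁻¹ • ((1 - a + c) • x i - c • u) := by
    rw [hp, hq]
    have hne : (1 + c) ≠ 0 := ne_of_gt h1c
    rw [smul_sub, smul_add]
    rw [sub_eq_iff_eq_add]
    match_scalars <;> field_simp <;> ring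
  have hnq : ‖(1 - a + c) • x i - c • u‖ ≤ (1 - a + c) + c := by
    calc ‖(1 - a + c) • x i - c • u‖ ≤ ‖(1 - a + c) • x i‖ + ‖c • u‖ := norm_sub_le _ _
      _ = (1 - a + c) * ‖x i‖ + c * ‖u‖ := by
          rw [norm_smul, norm_smul, Real.norm_eq_abs, Real.norm_eq_abs,
            abs_of_nonneg h1ac, abs_of_nonneg hc0]
      _ ≤ (1 - a + c) * 1 + c * 1 := by
          apply add_le_add
          · exact mul_le_mul_of_nonneg_left (le_of_eq (hx i)) h1ac
          · exact mul_le_mul_of_nonneg_left hu hc0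
      _ = (1 - a + c) + c := by ring
  have hfin : ‖p - u‖ ≤ (1 - a) + 2 * c := by
    rw [heq, norm_smul, Real.norm_eq_abs, abs_of_pos (inv_pos.mpr h1c)]
    have hinv1 : (1 + c)⁻¹ ≤ 1 := by
      rw [inv_le_one_iff₀]; right; linarith
    calc (1 + c)⁻¹ * ‖(1 - a + c) • x i - c • u‖ ≤ 1 * ((1 - a + c) + c) := by
          apply mul_le_mul hinv1 hnq (norm_nonneg _) zero_le_one
      _ = (1 - a) + 2 * c := by ring
  have hρηc : ρ * η / (1 - ρ) * 2 + η = (1 + ρ) / (1 - ρ) * η := by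
    field_simp; ring
  calc ‖p - u‖ ≤ (1 - a) + 2 * c := hfin
    _ ≤ η + 2 * (ρ * η / (1 - ρ)) := by
        have := hiu; have := hcη; linarith
    _ = (1 + ρ) / (1 - ρ) * η := by rw [← hρηc]; ring

lemma aux_ekeland [CompleteSpace X] (G : X →L[ℝ] ℝ) (F : Set X)
    (hcl : IsClosed F) (hne : F.Nonempty) (b : ℝ) (hbdd : ∀ u ∈ F, G u ≤ b)
    {θ : ℝ} (hθ : 0 < θ) :
    ∃ u₀ ∈ F, ∀ u ∈ F, G u ≤ G u₀ + θ * ‖u - u₀‖ := by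
  classical
  set S : X → Set X := fun w => {w' | w' ∈ F ∧ G w + θ * ‖w' - w‖ ≤ G w'} with hS
  have hself : ∀ w ∈ F, w ∈ S w := fun w hw => ⟨hw, by simp⟩
  have hsubset : ∀ w w', w' ∈ S w → S w' ⊆ S w := by
    rintro w w' ⟨hw'F, hw'⟩ w'' ⟨hw''F, hw''⟩
    refine ⟨hw''F, ?_⟩
    have htr : ‖w'' - w‖ ≤ ‖w'' - w'‖ + ‖w' - w‖ := by
      have := norm_add_le (w'' - w') (w' - w)
      simpa using this
    have h2 : θ * ‖w'' - w‖ ≤ θ * (‖w'' - w'‖ + ‖w' - w‖) :=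
      mul_le_mul_of_nonneg_left htr hθ.le
    have h3 : θ * (‖w'' - w'‖ + ‖w' - w‖) = θ * ‖w'' - w'‖ + θ * ‖w' - w‖ := by ring
    linarith
  have hstep : ∀ (n : ℕ) (w : X), w ∈ F →
      ∃ w', w' ∈ S w ∧ ∀ w'' ∈ S w, G w'' ≤ G w' + (1/2 : ℝ)^n := by
    intro n w hw
    have hSne : (G '' S w).Nonempty := ⟨G w, w, hself w hw, by simp⟩
    have hSbdd : BddAbove (G '' S w) := by
      refine ⟨b, ?_⟩
      rintro t ⟨w', hw', rfl⟩
      exact hbdd w' hw'.1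
    have hpos : (0:ℝ) < (1/2 : ℝ)^n := by positivity
    have hlt : sSup (G '' S w) - (1/2 : ℝ)^n < sSup (G '' S w) := by linarith
    obtain ⟨t, ⟨w', hw', rfl⟩, ht⟩ := exists_lt_of_lt_csSup hSne hlt
    refine ⟨w', hw', fun w'' hw'' => ?_⟩
    have h1 : G w'' ≤ sSup (G '' S w) := le_csSup hSbdd ⟨w'', hw'', rfl⟩
    linarith
  choose! step hstep1 hstep2 using hstep
  obtain ⟨w0, hw0⟩ := hne
  set u : ℕ → X := fun n => Nat.rec w0 (fun n w => step n w) n with hu_def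
  have hu_succ : ∀ n, u (n + 1) = step n (u n) := fun n => rfl
  have hu : ∀ n, u n ∈ F := by
    intro n
    induction n with
    | zero => exact hw0
    | succ n ih =>
      rw [hu_succ n]
      exact (hstep1 n (u n) ih).1
  have hnext : ∀ n, u (n + 1) ∈ S (u n) := by
    intro n; rw [hu_succ n]; exact hstep1 n (u n) (hu n)
  have hnear : ∀ n, ∀ w'' ∈ S (u n), G w'' ≤ G (u (n + 1)) + (1/2 : ℝ)^n := by
    intro n; rw [hu_succ n]; exact hstep2 n (u n) (hu n)
  have hchain : ∀ n m, n ≤ m → u m ∈ S (u n) := by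
    intro n m h
    induction m, h using Nat.le_induction with
    | base => exact hself (u n) (hu n)
    | succ m hm ih => exact hsubset (u n) (u m) ih (hnext m)
  have hdiam : ∀ n, ∀ w'' ∈ S (u (n + 1)), θ * ‖w'' - u (n + 1)‖ ≤ (1/2 : ℝ)^n := by
    intro n w'' hw''
    have h1 : w'' ∈ S (u n) := hsubset _ _ (hnext n) hw''
    have h2 := hnear n w'' h1
    have h3 := hw''.2
    linarith
  have hcauchy : CauchySeq u := by
    rw [Metric.cauchySeq_iff']
    intro ε hε
    obtain ⟨N₀, hN₀⟩ := exists_pow_lt_of_lt_one (mul_pos hθ hε) (by norm_num : (1/2:ℝ) < 1)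
    refine ⟨N₀ + 1, fun n hn => ?_⟩
    have h1 : u n ∈ S (u (N₀ + 1)) := hchain _ _ hn
    have h2 := hdiam N₀ (u n) h1
    have h3 : θ * dist (u n) (u (N₀ + 1))  < θ * ε := by
      rw [dist_eq_norm]; linarith
    exact lt_of_mul_lt_mul_left h3 hθ.le
  obtain ⟨u₀, hu₀⟩ := cauchySeq_tendsto_of_complete hcauchy
  have hu₀F : u₀ ∈ F := hcl.mem_of_tendsto hu₀ (Filter.Eventually.of_forall hu)
  have hSclosed : ∀ w, IsClosed (S w) := by
    intro w
    apply IsClosed.inter hcl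
    have hcont : Continuous fun w' : X => G w + θ * ‖w' - w‖ :=
      continuous_const.add (continuous_const.mul ((continuous_id.sub continuous_const).norm))
    exact isClosed_le hcont G.continuous
  have hu₀S : ∀ n, u₀ ∈ S (u n) := by
    intro n
    apply (hSclosed (u n)).mem_of_tendsto hu₀
    filter_upwards [Filter.eventually_ge_atTop n] with m hm
    exact hchain n m hm
  refine ⟨u₀, hu₀F, ?_⟩
  intro w hw
  by_contra hcon
  push_neg at hcon
  have hwS : ∀ n, w ∈ S (u n) := by
    intro n
    have h1 := (hu₀S n).2
    refine ⟨hw, ?_⟩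
    have htr : ‖w - u n‖ ≤ ‖w - u₀‖ + ‖u₀ - u n‖ := by
      have := norm_add_le (w - u₀) (u₀ - u n)
      simpa using this
    have h2 : θ * ‖w - u n‖ ≤ θ * ‖w - u₀‖ + θ * ‖u₀ - u n‖ := by
      have := mul_le_mul_of_nonneg_left htr hθ.le
      linarith [this, mul_add θ ‖w - u₀‖ ‖u₀ - u n‖]
    linarith [hcon.le]
  have hbnd : ∀ n, θ * ‖w - u (n + 1)‖ ≤ (1/2 : ℝ)^n :=
    fun n => hdiam n w (hwS (n + 1))
  have hlim : Filter.Tendsto (fun n => θ * ‖w - u (n + 1)‖) Filter.atTop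
      (nhds (θ * ‖w - u₀‖)) := by
    apply Filter.Tendsto.const_mul
    exact ((hu₀.comp (Filter.tendsto_add_atTop_nat 1)).const_sub w).norm
  have hhalf : Filter.Tendsto (fun n : ℕ => (1/2 : ℝ)^n) Filter.atTop (nhds 0) := by
    apply tendsto_pow_atTop_nhds_zero_of_lt_one <;> norm_num
  have hle : θ * ‖w - u₀‖ ≤ 0 :=
    le_of_tendsto_of_tendsto' hlim hhalf hbnd
  have hw0' : ‖w - u₀‖ = 0 := by
    nlinarith [norm_nonneg (w - u₀)]
  have hwu : w = u₀ := by
    rw [← sub_eq_zero]; exact norm_eq_zero.mp hw0'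
  rw [hwu] at hcon
  simp at hcon
lemma aux_support [CompleteSpace X] (G : X →L[ℝ] ℝ) (F : Set X)
    (hcl : IsClosed F) (hconv : Convex ℝ F) (hne : F.Nonempty) (b : ℝ)
    (hbdd : ∀ u ∈ F, G u ≤ b) {θ : ℝ} (hθ : 0 < θ) :
    ∃ (d : X →L[ℝ] ℝ) (u₀ : X), ‖d‖ ≤ θ ∧ u₀ ∈ F ∧
      ∀ u ∈ F, G u - d u ≤ G u₀ - d u₀ := by
  obtain ⟨u₀, hu₀F, hmax⟩ := aux_ekeland G F hcl hne b hbdd hθ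
  set K : Set X := {w | ∃ t : ℝ, 0 ≤ t ∧ ∃ q ∈ F, w = t • (q - u₀)} with hK
  have h0K : (0:X) ∈ K := ⟨0, le_refl 0, u₀, hu₀F, by simp⟩
  have hGK : ∀ w ∈ K, G w ≤ θ * ‖w‖ := by
    rintro w ⟨t, ht, q, hq, rfl⟩
    rw [map_smul, smul_eq_mul, norm_smul, Real.norm_eq_abs, abs_of_nonneg ht]
    have h1 : G (q - u₀) ≤ θ * ‖q - u₀‖ := by
      have h2 := hmax q hq
      rw [map_sub]; linarith
    calc t * G (q - u₀) ≤ t * (θ * ‖q - u₀‖) := mul_le_mul_of_nonneg_left h1 ht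
      _ = θ * (t * ‖q - u₀‖) := by ring
  have haddK : ∀ w₁ ∈ K, ∀ w₂ ∈ K, w₁ + w₂ ∈ K := by
    rintro w₁ ⟨t₁, ht₁, q₁, hq₁, rfl⟩ w₂ ⟨t₂, ht₂, q₂, hq₂, rfl⟩
    rcases eq_or_lt_of_le (add_nonneg ht₁ ht₂) with h0 | hpos
    · have ht₁0 : t₁ = 0 := by linarith
      have ht₂0 : t₂ = 0 := by linarith
      rw [ht₁0, ht₂0]
      simpa using h0K
    · have htne : t₁ + t₂ ≠ 0 := ne_of_gt hpos
      refine ⟨t₁ + t₂, hpos.le,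
        (t₁ / (t₁ + t₂)) • q₁ + (t₂ / (t₁ + t₂)) • q₂, ?_, ?_⟩
      · exact hconv hq₁ hq₂ (div_nonneg ht₁ hpos.le) (div_nonneg ht₂ hpos.le)
          (by field_simp)
      · match_scalars <;> field_simp <;> ring
  have hsmulK : ∀ (c : ℝ), 0 ≤ c → ∀ w ∈ K, c • w ∈ K := by
    rintro c hc w ⟨t, ht, q, hq, rfl⟩
    exact ⟨c * t, mul_nonneg hc ht, q, hq, by rw [smul_smul]⟩
  set Nf : X → ℝ := fun w => sInf ((fun k => θ * ‖w + k‖ - G k) '' K) with hNf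
  have hNne : ∀ w : X, ((fun k => θ * ‖w + k‖ - G k) '' K).Nonempty :=
    fun w => ⟨θ * ‖w + 0‖ - G 0, 0, h0K, rfl⟩
  have hNbdd : ∀ w : X, ∀ r ∈ ((fun k => θ * ‖w + k‖ - G k) '' K), -(θ * ‖w‖) ≤ r := by
    rintro w r ⟨k, hk, rfl⟩
    have h1 : G k ≤ θ * ‖k‖ := hGK k hk
    have h2 : ‖k‖ ≤ ‖w + k‖ + ‖w‖ := by
      have h3 := norm_sub_le (w + k) w
      simpa using h3
    have h4 := mul_le_mul_of_nonneg_left h2 hθ.le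
    show -(θ * ‖w‖) ≤ θ * ‖w + k‖ - G k
    nlinarith
  have hNbddBelow : ∀ w : X, BddBelow ((fun k => θ * ‖w + k‖ - G k) '' K) :=
    fun w => ⟨-(θ * ‖w‖), fun r hr => hNbdd w r hr⟩
  have hNle : ∀ w : X, Nf w ≤ θ * ‖w‖ := by
    intro w
    have := csInf_le (hNbddBelow w) ⟨0, h0K, rfl⟩
    simpa using this
  have hN0 : 0 ≤ Nf 0 := by
    apply le_csInf (hNne 0)
    rintro r ⟨k, hk, rfl⟩
    have h1 := hGK k hk
    simp only [zero_add]
    linarith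
  have hNhom : ∀ (c : ℝ), 0 < c → ∀ w, Nf (c • w) = c * Nf w := by
    intro c hc w
    have hseteq : ((fun k => θ * ‖c • w + k‖ - G k) '' K) =
        (fun r => c * r) '' ((fun k => θ * ‖w + k‖ - G k) '' K) := by
      ext r
      constructor
      · rintro ⟨k, hk, rfl⟩
        refine ⟨θ * ‖w + c⁻¹ • k‖ - G (c⁻¹ • k),
          ⟨c⁻¹ • k, hsmulK c⁻¹ (inv_nonneg.mpr hc.le) k hk, rfl⟩, ?_⟩
        show c * (θ * ‖w + c⁻¹ • k‖ - G (c⁻¹ • k)) = θ * ‖c • w + k‖ - G k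
        have h1 : c • w + k = c • (w + c⁻¹ • k) := by
          rw [smul_add, smul_inv_smul₀ (ne_of_gt hc)]
        rw [h1, norm_smul, Real.norm_eq_abs, abs_of_pos hc, map_smul, smul_eq_mul]
        field_simp
      · rintro ⟨r', ⟨k, hk, rfl⟩, rfl⟩
        refine ⟨c • k, hsmulK c hc.le k hk, ?_⟩
        show θ * ‖c • w + c • k‖ - G (c • k) = c * (θ * ‖w + k‖ - G k)
        have h1 : c • w + c • k = c • (w + k) := by rw [smul_add]
        rw [h1, norm_smul, Real.norm_eq_abs, abs_of_pos hc, map_smul, smul_eq_mul]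
        ring
    rw [hNf]
    simp only
    rw [hseteq]
    have h2 : (fun r => c * r) '' ((fun k => θ * ‖w + k‖ - G k) '' K) =
        c • ((fun k => θ * ‖w + k‖ - G k) '' K) := by
      ext r
      simp [Set.mem_smul_set, smul_eq_mul]
    rw [h2, Real.sInf_smul_of_nonneg hc.le, smul_eq_mul]
  have hNadd : ∀ w₁ w₂, Nf (w₁ + w₂) ≤ Nf w₁ + Nf w₂ := by
    intro w₁ w₂
    have key : ∀ r₁ ∈ ((fun k => θ * ‖w₁ + k‖ - G k) '' K),
        ∀ r₂ ∈ ((fun k => θ * ‖w₂ + k‖ - G k) '' K), Nf (w₁ + w₂) ≤ r₁ + r₂ := by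
      rintro r₁ ⟨k₁, hk₁, rfl⟩ r₂ ⟨k₂, hk₂, rfl⟩
      have hmem : θ * ‖(w₁ + w₂) + (k₁ + k₂)‖ - G (k₁ + k₂) ∈
          ((fun k => θ * ‖(w₁ + w₂) + k‖ - G k) '' K) :=
        ⟨k₁ + k₂, haddK k₁ hk₁ k₂ hk₂, rfl⟩
      have h1 := csInf_le (hNbddBelow (w₁ + w₂)) hmem
      have h2 : ‖(w₁ + w₂) + (k₁ + k₂)‖ ≤ ‖w₁ + k₁‖ + ‖w₂ + k₂‖ := by
        have h3 := norm_add_le (w₁ + k₁) (w₂ + k₂)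
        have h4 : (w₁ + k₁) + (w₂ + k₂) = (w₁ + w₂) + (k₁ + k₂) := by abel
        rw [h4] at h3
        exact h3
      have h5 : G (k₁ + k₂) = G k₁ + G k₂ := map_add _ _ _
      have h6 := mul_le_mul_of_nonneg_left h2 hθ.le
      show Nf (w₁ + w₂) ≤ (θ * ‖w₁ + k₁‖ - G k₁) + (θ * ‖w₂ + k₂‖ - G k₂)
      nlinarith
    have h6 : ∀ r₂ ∈ ((fun k => θ * ‖w₂ + k‖ - G k) '' K),
        Nf (w₁ + w₂) - r₂ ≤ Nf w₁ := by
      intro r₂ hr₂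
      apply le_csInf (hNne w₁)
      intro r₁ hr₁
      have := key r₁ hr₁ r₂ hr₂
      linarith
    have h7 : Nf (w₁ + w₂) - Nf w₂ ≤ Nf w₁ := by
      have h8 : Nf w₁ + Nf w₂ ≥ Nf (w₁ + w₂) - 0 → True := fun _ => trivial
      have h9 : ∀ r₂ ∈ ((fun k => θ * ‖w₂ + k‖ - G k) '' K),
          Nf (w₁ + w₂) - Nf w₁ ≤ r₂ := by
        intro r₂ hr₂
        have := h6 r₂ hr₂
        linarith
      have h10 := le_csInf (hNne w₂) h9
      linarith
    linarith
  obtain ⟨g, hg_eq, hgN⟩ := exists_extension_of_le_sublinear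
    (LinearMap.toPMap (0 : X →ₗ[ℝ] ℝ) ⊥) Nf hNhom hNadd (by
      rintro ⟨w, hw⟩
      have hw0 : w = 0 := by simpa using hw
      subst hw0
      simpa using hN0)
  have hgnorm : ∀ w, ‖g w‖ ≤ θ * ‖w‖ := by
    intro w
    rw [Real.norm_eq_abs, abs_le]
    constructor
    · have h1 := hgN (-w)
      have h2 : Nf (-w) ≤ θ * ‖-w‖ := hNle (-w)
      rw [norm_neg] at h2
      have h3 : g (-w) = -g w := map_neg g w
      linarith [h1, h2, h3.symm.le, h3.le]
    · exact le_trans (hgN w) (hNle w)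
  set d : X →L[ℝ] ℝ := LinearMap.mkContinuous g θ hgnorm with hd
  have hdnorm : ‖d‖ ≤ θ := LinearMap.mkContinuous_norm_le g hθ.le hgnorm
  have hdapp : ∀ w, d w = g w := fun w => rfl
  have hdK : ∀ k ∈ K, G k ≤ d k := by
    intro k hk
    have h1 : g (-k) ≤ Nf (-k) := hgN (-k)
    have h2 : Nf (-k) ≤ θ * ‖-k + k‖ - G k := csInf_le (hNbddBelow (-k)) ⟨k, hk, rfl⟩
    have h3 : (-k : X) + k = 0 := by abel
    rw [h3] at h2
    simp only [norm_zero, mul_zero, zero_sub] at h2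
    have h4 : g (-k) = -g k := map_neg g k
    rw [hdapp]
    linarith
  refine ⟨d, u₀, hdnorm, hu₀F, ?_⟩
  intro u hu
  have hmem : u - u₀ ∈ K := ⟨1, zero_le_one, u, hu, (one_smul ℝ (u - u₀)).symm⟩
  have h1 := hdK (u - u₀) hmem
  rw [map_sub, map_sub] at h1
  linarith
lemma aux_rankone_compact (e : X →L[ℝ] ℝ) (w : X) :
    IsCompactOperator (e.smulRight w) := by
  refine ⟨(fun c : ℝ => c • w) '' (Set.Icc (-(‖e‖+1)) (‖e‖+1)), ?_, ?_⟩
  · exact (isCompact_Icc).image (continuous_id.smul continuous_const)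
  · apply Filter.mem_of_superset (Metric.ball_mem_nhds (0:X) one_pos)
    intro u hu
    have hu1 : ‖u‖ < 1 := by simpa [Metric.mem_ball] using hu
    have h1 : |e u| ≤ ‖e‖ := by
      calc |e u| ≤ ‖e‖ * ‖u‖ := e.le_opNorm u
        _ ≤ ‖e‖ * 1 := mul_le_mul_of_nonneg_left hu1.le (norm_nonneg _)
        _ = ‖e‖ := mul_one _
    have h2 := abs_le.mp h1
    exact ⟨e u, ⟨by linarith [h2.1], by linarith [h2.2]⟩, rfl⟩

end

set_option maxHeartbeats 1600000 in
/-- If `X` has property β, then the numerical radius attaining compact operators are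
dense in the compact operators on `X`. -/
theorem NRA_compact_dense_of_propertyBeta
    {X : Type u} [NormedAddCommGroup X] [NormedSpace ℝ X] [CompleteSpace X]
    (h : PropertyBeta X) :
    ∀ T : X →L[ℝ] X, IsCompactOperator T →
      T ∈ closure {S : X →L[ℝ] X | AttainsNumRadius S ∧ IsCompactOperator S} := by

  obtain ⟨ι, x, xs, ρ, hρ0, hρ1, hx1, hxs1, hxx1, hsep, hball⟩ := h
  intro T hT
  rw [Metric.mem_closure_iff]
  intro ε hε
  -- ι is nonempty
  have hιne : Nonempty ι := by
    by_contra hcon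
    have hempty : IsEmpty ι := not_nonempty_iff.mp hcon
    have h0 : StrongDual.toWeakDual (0 : StrongDual ℝ X) ∈
        ⇑StrongDual.toWeakDual '' Metric.closedBall (0 : StrongDual ℝ X) 1 :=
      ⟨0, by simp, rfl⟩
    rw [hball] at h0
    have hre : (Set.range (fun i : ι => StrongDual.toWeakDual (xs i))) = ∅ :=
      Set.range_eq_empty _
    rw [hre] at h0
    simp at h0
  obtain ⟨i₁⟩ := hιne
  -- basic facts about the numerical radius set
  have hbddA : ∀ A : X →L[ℝ] X, BddAbove
      {r : ℝ | ∃ (z : X) (f : X →L[ℝ] ℝ), ‖z‖ = 1 ∧ ‖f‖ = 1 ∧ f z = 1 ∧ r = |f (A z)|} := by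
    intro A
    refine ⟨‖A‖, ?_⟩
    rintro r ⟨z, f, hz, hf, hfz, rfl⟩
    calc |f (A z)| ≤ ‖f‖ * ‖A z‖ := f.le_opNorm _
      _ = ‖A z‖ := by rw [hf, one_mul]
      _ ≤ ‖A‖ * ‖z‖ := A.le_opNorm _
      _ = ‖A‖ := by rw [hz, mul_one]
  have hmemA : ∀ (A : X →L[ℝ] X) (z : X) (f : X →L[ℝ] ℝ), ‖z‖ = 1 → ‖f‖ = 1 → f z = 1 →
      |f (A z)| ∈ {r : ℝ | ∃ (z : X) (f : X →L[ℝ] ℝ), ‖z‖ = 1 ∧ ‖f‖ = 1 ∧ f z = 1 ∧ r = |f (A z)|} :=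
    fun A z f hz hf hfz => ⟨z, f, hz, hf, hfz, rfl⟩
  have hneA : ∀ A : X →L[ℝ] X,
      {r : ℝ | ∃ (z : X) (f : X →L[ℝ] ℝ), ‖z‖ = 1 ∧ ‖f‖ = 1 ∧ f z = 1 ∧ r = |f (A z)|}.Nonempty :=
    fun A => ⟨|xs i₁ (A (x i₁))|, x i₁, xs i₁, hx1 i₁, hxs1 i₁, hxx1 i₁, rfl⟩
  have hnumA : ∀ A : X →L[ℝ] X, numRadius A =
      sSup {r : ℝ | ∃ (z : X) (f : X →L[ℝ] ℝ), ‖z‖ = 1 ∧ ‖f‖ = 1 ∧ f z = 1 ∧ r = |f (A z)|} :=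
    fun A => rfl
  have hfaceA : ∀ (A : X →L[ℝ] X) (j : ι) (p : X), ‖p‖ = 1 → xs j p = 1 →
      |xs j (A p)| ≤ numRadius A := by
    intro A j p hp hjp
    rw [hnumA A]
    exact le_csSup (hbddA A) (hmemA A p (xs j) hp (hxs1 j) hjp)
  set v : ℝ := numRadius T with hv
  have hv0 : 0 ≤ v := le_trans (abs_nonneg _)
    (hfaceA T i₁ (x i₁) (hx1 i₁) (hxx1 i₁))
  rcases eq_or_lt_of_le hv0 with hveq | hvpos
  · -- v = 0 : T itself attains
    refine ⟨T, ⟨⟨x i₁, xs i₁, hx1 i₁, hxs1 i₁, hxx1 i₁, ?_⟩, hT⟩, by simpa using hε⟩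
    have h1 : |xs i₁ (T (x i₁))| ≤ v := hfaceA T i₁ (x i₁) (hx1 i₁) (hxx1 i₁)
    have h2 : 0 ≤ |xs i₁ (T (x i₁))| := abs_nonneg _
    rw [← hv]
    linarith [hveq]
  · -- v > 0
    set Cρ : ℝ := (1 + ρ) / (1 - ρ) with hCρ
    have h1ρ : (0:ℝ) < 1 - ρ := by linarith
    have hCρ1 : 1 ≤ Cρ := by
      rw [hCρ, le_div_iff₀ h1ρ]; linarith
    have hCρ0 : 0 < Cρ := lt_of_lt_of_le one_pos hCρ1
    set lam : ℝ := ε / 2 with hlamdef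
    have hlam : 0 < lam := by positivity
    set D : ℝ := 5 + ‖T‖ * Cρ with hD
    have hTCρ : 0 ≤ ‖T‖ * Cρ := mul_nonneg (norm_nonneg _) hCρ0.le
    have hD5 : 5 ≤ D := by rw [hD]; linarith
    have hD0 : 0 < D := by linarith
    set δ : ℝ := min (lam * (1 - ρ)) v / (2 * D) with hδdef
    have hmin0 : 0 < min (lam * (1 - ρ)) v := lt_min (by positivity) hvpos
    have hδ0 : 0 < δ := div_pos hmin0 (by linarith)
    have hδD : δ * D = min (lam * (1 - ρ)) v / 2 := by
      rw [hδdef]; field_simp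
    have hδD1 : δ * D ≤ lam * (1 - ρ) / 2 := by
      rw [hδD]; have := min_le_left (lam * (1 - ρ)) v; linarith
    have hδD2 : δ * D ≤ v / 2 := by
      rw [hδD]; have := min_le_right (lam * (1 - ρ)) v; linarith
    set δ₁ : ℝ := 2 * δ + ‖T‖ * Cρ * δ with hδ₁def
    have hδ₁D : δ₁ + 3 * δ = δ * D := by rw [hδ₁def, hD]; ring
    have condA : δ₁ + 3 * δ ≤ lam * (1 - ρ) := by
      rw [hδ₁D]; linarith
    have condB : δ₁ ≤ v / 2 := by
      have : δ₁ ≤ δ₁ + 3 * δ := by linarith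
      rw [hδ₁D] at this; linarith
    have hlamρ : lam * (1 - ρ) ≤ lam := by
      have h := mul_le_mul_of_nonneg_left (show (1 - ρ : ℝ) ≤ 1 by linarith) hlam.le
      linarith
    have h5δ : 5 * δ ≤ δ * D := by
      have h := mul_le_mul_of_nonneg_left hD5 hδ0.le
      linarith
    have hδlam : δ ≤ lam := by linarith
    have hδ₁0 : 0 ≤ δ₁ := by
      rw [hδ₁def]
      have h := mul_nonneg hTCρ hδ0.le
      linarith
    -- Step 1 : get a near-optimal pair
    have hlt : v - δ < sSup {r : ℝ | ∃ (z : X) (f : X →L[ℝ] ℝ),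
        ‖z‖ = 1 ∧ ‖f‖ = 1 ∧ f z = 1 ∧ r = |f (T z)|} := by
      rw [← hnumA T, ← hv]; linarith
    obtain ⟨r, hrmem, hrgt⟩ := exists_lt_of_lt_csSup (hneA T) hlt
    obtain ⟨z, f, hz, hf, hfz, rfl⟩ := hrmem
    -- Step 2 : select an index
    obtain ⟨i, h2a, h2b⟩ := aux_pair_bound hball hxs1 T z f hz hf hfz hδ0
    have hTz : v - 2 * δ ≤ |xs i (T z)| := by linarith
    -- Step 3 : sign adjust
    set w₁ : X := if 0 ≤ xs i z then z else -z with hw₁def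
    have hw₁n : ‖w₁‖ = 1 := by
      rw [hw₁def]; split <;> simp [hz]
    have hw₁i : 1 - δ ≤ xs i w₁ := by
      rw [hw₁def]; split_ifs with hb
      · rwa [abs_of_nonneg hb] at h2a
      · push_neg at hb
        rw [map_neg]
        rwa [abs_of_neg hb] at h2a
    have hTw₁ : |xs i (T w₁)| = |xs i (T z)| := by
      rw [hw₁def]; split <;> simp [abs_neg]
    -- Step 4 : exact face point
    obtain ⟨p₁, hp₁n, hip₁, hp₁w⟩ := aux_face hρ0 hρ1 hball hx1 hxs1 hxx1 hsep i w₁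
      hδ0.le hw₁n.le hw₁i
    have hTp₁ : v - δ₁ ≤ |xs i (T p₁)| := by
      have hd1 : |xs i (T w₁)| - |xs i (T p₁)| ≤ |xs i (T w₁) - xs i (T p₁)| :=
        abs_sub_abs_le_abs_sub _ _
      have hd2 : xs i (T w₁) - xs i (T p₁) = xs i (T (w₁ - p₁)) := by
        rw [map_sub, map_sub]
      have hd3 : |xs i (T (w₁ - p₁))| ≤ ‖T‖ * (Cρ * δ) := by
        calc |xs i (T (w₁ - p₁))| ≤ ‖xs i‖ * ‖T (w₁ - p₁)‖ := (xs i).le_opNorm _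
          _ = ‖T (w₁ - p₁)‖ := by rw [hxs1 i, one_mul]
          _ ≤ ‖T‖ * ‖w₁ - p₁‖ := T.le_opNorm _
          _ ≤ ‖T‖ * (Cρ * δ) := by
              apply mul_le_mul_of_nonneg_left ?_ (norm_nonneg T)
              rw [norm_sub_rev]
              exact hp₁w
      rw [hd2] at hd1
      rw [hδ₁def]
      rw [hTw₁] at hd1
      linarith [hd3, hTz]
    -- Step 5 : sign of the value
    set τ : ℝ := if 0 ≤ xs i (T p₁) then (1:ℝ) else -1 with hτdef
    have hτ1 : τ = 1 ∨ τ = -1 := by rw [hτdef]; split <;> simp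
    have hτabs : ∀ r : ℝ, |τ * r| = |r| := by
      intro r; rcases hτ1 with hτ | hτ <;> rw [hτ] <;> simp [abs_mul]
    have hτsq : τ * τ = 1 := by rcases hτ1 with hτ | hτ <;> rw [hτ] <;> norm_num
    have hτval : τ * xs i (T p₁) = |xs i (T p₁)| := by
      rw [hτdef]; split_ifs with hb
      · rw [abs_of_nonneg hb, one_mul]
      · push_neg at hb; rw [abs_of_neg hb]; ring
    -- Step 6-7 : the face and the supporting perturbation
    set G : X →L[ℝ] ℝ := τ • ((xs i).comp T) with hG
    have hGapp : ∀ u, G u = τ * xs i (T u) := by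
      intro u; rw [hG]; simp
    set F : Set X := {u : X | ‖u‖ ≤ 1 ∧ xs i u = 1} with hF
    have hFclosed : IsClosed F := by
      apply IsClosed.inter
      · exact isClosed_le continuous_norm continuous_const
      · exact isClosed_eq (xs i).continuous continuous_const
    have hFconvex : Convex ℝ F := by
      rintro u₁ ⟨hu₁n, hu₁i⟩ u₂ ⟨hu₂n, hu₂i⟩ a b ha hb hab
      constructor
      · calc ‖a • u₁ + b • u₂‖ ≤ ‖a • u₁‖ + ‖b • u₂‖ := norm_add_le _ _
          _ = a * ‖u₁‖ + b * ‖u₂‖ := by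
              rw [norm_smul, norm_smul, Real.norm_eq_abs, Real.norm_eq_abs,
                abs_of_nonneg ha, abs_of_nonneg hb]
          _ ≤ a * 1 + b * 1 := add_le_add (mul_le_mul_of_nonneg_left hu₁n ha)
              (mul_le_mul_of_nonneg_left hu₂n hb)
          _ = 1 := by rw [mul_one, mul_one, hab]
      · rw [map_add, map_smul, map_smul, smul_eq_mul, smul_eq_mul, hu₁i, hu₂i,
          mul_one, mul_one, hab]
    have hFne : F.Nonempty := ⟨x i, le_of_eq (hx1 i), hxx1 i⟩
    have hFbdd : ∀ u ∈ F, G u ≤ ‖G‖ := by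
      rintro u ⟨hun, -⟩
      calc G u ≤ |G u| := le_abs_self _
        _ ≤ ‖G‖ * ‖u‖ := G.le_opNorm _
        _ ≤ ‖G‖ * 1 := mul_le_mul_of_nonneg_left hun (norm_nonneg _)
        _ = ‖G‖ := mul_one _
    obtain ⟨d, u₀, hdn, hu₀F, hmax⟩ := aux_support G F hFclosed hFconvex hFne ‖G‖ hFbdd hδ0
    -- the perturbed operator
    set e : X →L[ℝ] ℝ := τ • (lam • (xs i) - d) with he
    set S : X →L[ℝ] X := T + e.smulRight (x i) with hSdef
    have heapp : ∀ u, e u = τ * (lam * xs i u - d u) := by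
      intro u; rw [he]; simp
    have hSapp : ∀ (j : ι) (u : X), xs j (S u) = xs j (T u) +
        τ * (lam * xs i u - d u) * xs j (x i) := by
      intro j u
      rw [hSdef]
      simp only [ContinuousLinearMap.add_apply, ContinuousLinearMap.smulRight_apply,
        map_add, map_smul, smul_eq_mul]
      rw [heapp u]
    have hSi : ∀ u, τ * xs i (S u) = (G u - d u) + lam * xs i u := by
      intro u
      rw [hSapp i u, hxx1 i, mul_one, hGapp u]
      linear_combination (lam * xs i u - d u) * hτsq
    have hSTnorm : ‖S - T‖ ≤ lam + δ := by
      have h1 : S - T = e.smulRight (x i) := by rw [hSdef]; abel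
      rw [h1]
      have h2 : ‖e.smulRight (x i)‖ ≤ ‖e‖ * ‖x i‖ := by
        rw [ContinuousLinearMap.norm_smulRight_apply]
      have h3 : ‖e‖ ≤ lam + δ := by
        rw [he]
        calc ‖τ • (lam • (xs i) - d)‖ = ‖τ‖ * ‖lam • (xs i) - d‖ := norm_smul _ _
          _ ≤ 1 * (‖lam • (xs i)‖ + ‖d‖) := by
              apply mul_le_mul ?_ (norm_sub_le _ _) (norm_nonneg _) zero_le_one
              rcases hτ1 with hτ | hτ <;> rw [hτ] <;> simp
          _ = ‖lam • (xs i)‖ + ‖d‖ := one_mul _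
          _ ≤ lam + δ := by
              apply add_le_add ?_ hdn
              rw [norm_smul, Real.norm_eq_abs, abs_of_pos hlam, hxs1 i, mul_one]
      calc ‖e.smulRight (x i)‖ ≤ ‖e‖ * ‖x i‖ := h2
        _ = ‖e‖ := by rw [hx1 i, mul_one]
        _ ≤ lam + δ := h3
    have hScompact : IsCompactOperator S := by
      have h1 : IsCompactOperator (⇑T + ⇑(e.smulRight (x i))) :=
        hT.add (aux_rankone_compact e (x i))
      have h2 : ⇑S = ⇑T + ⇑(e.smulRight (x i)) := by
        rw [hSdef]; rfl
      rw [h2]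
      exact h1
    set M : ℝ := G u₀ - d u₀ + lam with hM
    have hdp : ∀ p : X, ‖p‖ = 1 → |d p| ≤ δ := by
      intro p hp
      calc |d p| ≤ ‖d‖ * ‖p‖ := d.le_opNorm _
        _ ≤ δ * 1 := mul_le_mul hdn (le_of_eq hp) (norm_nonneg _) hδ0.le
        _ = δ := mul_one _
    have hMv : v - δ₁ - δ + lam ≤ M := by
      have h1 : G p₁ - d p₁ ≤ G u₀ - d u₀ := hmax p₁ ⟨hp₁n.le, hip₁⟩
      have h2 : G p₁ = |xs i (T p₁)| := by rw [hGapp, hτval]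
      have h3 := abs_le.mp (hdp p₁ hp₁n)
      rw [hM]
      linarith [h1, h2, hTp₁, h3.1, h3.2]
    have hM0 : 0 < M := by linarith [hMv, condB, hδlam, hvpos]
    -- the attaining point
    have hu₀n : ‖u₀‖ = 1 := by
      obtain ⟨hn, hi⟩ := hu₀F
      refine le_antisymm hn ?_
      calc (1:ℝ) = xs i u₀ := hi.symm
        _ ≤ |xs i u₀| := le_abs_self _
        _ ≤ ‖xs i‖ * ‖u₀‖ := (xs i).le_opNorm _
        _ = ‖u₀‖ := by rw [hxs1 i, one_mul]
    have hval : |xs i (S u₀)| = M := by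
      have h1 : τ * xs i (S u₀) = M := by
        rw [hSi u₀, hu₀F.2, mul_one, hM]
      rw [← hτabs (xs i (S u₀)), h1, abs_of_pos hM0]
    -- THE KEY CLAIM : every pair value is at most M
    have hclaim : ∀ (z' : X) (f' : X →L[ℝ] ℝ), ‖z'‖ = 1 → ‖f'‖ = 1 → f' z' = 1 →
        |f' (S z')| ≤ M := by
      intro z' f' hz' hf' hfz'
      apply le_of_forall_pos_le_add
      intro κ hκ
      set C' : ℝ := 1 + ‖S‖ * Cρ with hC'
      have hC'0 : 0 < C' := by
        have h := mul_nonneg (norm_nonneg S) hCρ0.le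
        linarith
      set η : ℝ := κ / C' with hη'
      have hη : 0 < η := div_pos hκ hC'0
      have hηC' : η * C' = κ := div_mul_cancel₀ κ (ne_of_gt hC'0)
      obtain ⟨j, hj1, hj2⟩ := aux_pair_bound hball hxs1 S z' f' hz' hf' hfz' hη
      -- sign adjust
      set w' : X := if 0 ≤ xs j z' then z' else -z' with hw'def
      have hw'n : ‖w'‖ = 1 := by rw [hw'def]; split <;> simp [hz']
      have hw'j : 1 - η ≤ xs j w' := by
        rw [hw'def]; split_ifs with hb
        · rwa [abs_of_nonneg hb] at hj1
        · push_neg at hb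
          rw [map_neg]
          rwa [abs_of_neg hb] at hj1
      have hSw' : |xs j (S w')| = |xs j (S z')| := by
        rw [hw'def]; split <;> simp [abs_neg]
      obtain ⟨p', hp'n, hjp', hp'w⟩ := aux_face hρ0 hρ1 hball hx1 hxs1 hxx1 hsep j w'
        hη.le hw'n.le hw'j
      have hdiff : |xs j (S z')| ≤ |xs j (S p')| + ‖S‖ * (Cρ * η) := by
        have hd1 : |xs j (S w')| - |xs j (S p')| ≤ |xs j (S w') - xs j (S p')| :=
          abs_sub_abs_le_abs_sub _ _
        have hd2 : xs j (S w') - xs j (S p') = xs j (S (w' - p')) := by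
          rw [map_sub, map_sub]
        have hd3 : |xs j (S (w' - p'))| ≤ ‖S‖ * (Cρ * η) := by
          calc |xs j (S (w' - p'))| ≤ ‖xs j‖ * ‖S (w' - p')‖ := (xs j).le_opNorm _
            _ = ‖S (w' - p')‖ := by rw [hxs1 j, one_mul]
            _ ≤ ‖S‖ * ‖w' - p'‖ := S.le_opNorm _
            _ ≤ ‖S‖ * (Cρ * η) := by
                apply mul_le_mul_of_nonneg_left ?_ (norm_nonneg S)
                rw [norm_sub_rev]
                exact hp'w
        rw [hd2] at hd1
        rw [← hSw']
        linarith
      have hface' : |xs j (S p')| ≤ M := by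
        by_cases hji : j = i
        · subst hji
          have h1 : τ * xs j (S p') = (G p' - d p') + lam := by
            rw [hSi p', hjp', mul_one]
          have h2 : G p' - d p' ≤ G u₀ - d u₀ := hmax p' ⟨hp'n.le, hjp'⟩
          have h3 : |G p'| ≤ v := by
            rw [hGapp, hτabs]
            exact hfaceA T j p' hp'n hjp'
          have h4 := abs_le.mp h3
          have h5 := abs_le.mp (hdp p' hp'n)
          have hub : τ * xs j (S p') ≤ M := by rw [h1, hM]; linarith
          have hlb : -M ≤ τ * xs j (S p') := by
            rw [h1]
            linarith [hMv, h4.1, h5.2, condA, hlamρ, hδ0.le]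
          rw [← hτabs (xs j (S p')), abs_le]
          exact ⟨by linarith, hub⟩
        · have h1 : xs j (S p') = xs j (T p') + τ * (lam * xs i p' - d p') * xs j (x i) :=
            hSapp j p'
          have h2 : |xs j (T p')| ≤ v := hfaceA T j p' hp'n hjp'
          have h3 : |xs i p'| ≤ 1 := by
            calc |xs i p'| ≤ ‖xs i‖ * ‖p'‖ := (xs i).le_opNorm _
              _ = 1 := by rw [hxs1 i, hp'n, one_mul]
          have h4 := abs_le.mp (hdp p' hp'n)
          have h5 : |xs j (x i)| ≤ ρ := hsep j i hji
          have h6 : |τ * (lam * xs i p' - d p') * xs j (x i)| ≤ (lam + δ) * ρ := by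
            rw [abs_mul, hτabs]
            apply mul_le_mul ?_ h5 (abs_nonneg _) (by positivity)
            calc |lam * xs i p' - d p'| ≤ |lam * xs i p'| + |d p'| := abs_sub _ _
              _ ≤ lam * 1 + δ := by
                  apply add_le_add ?_ (hdp p' hp'n)
                  rw [abs_mul, abs_of_pos hlam]
                  exact mul_le_mul_of_nonneg_left h3 hlam.le
              _ = lam + δ := by ring
          have h7 : |xs j (S p')| ≤ v + (lam + δ) * ρ := by
            rw [h1]
            calc |xs j (T p') + τ * (lam * xs i p' - d p') * xs j (x i)| ≤
                |xs j (T p')| + |τ * (lam * xs i p' - d p') * xs j (x i)| := abs_add_le _ _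
              _ ≤ v + (lam + δ) * ρ := add_le_add h2 h6
          -- v + (lam + δ)ρ ≤ M using condA
          have h8 : v + (lam + δ) * ρ ≤ M := by
            have hδρ : δ * ρ ≤ δ := by
              have h := mul_le_mul_of_nonneg_left hρ1.le hδ0.le
              linarith
            have hexp1 : lam * (1 - ρ) = lam - lam * ρ := by ring
            have hexp2 : (lam + δ) * ρ = lam * ρ + δ * ρ := by ring
            linarith [condA, hMv, hδρ]
          linarith
      calc |f' (S z')| ≤ |xs j (S z')| + η := by linarith
        _ ≤ |xs j (S p')| + ‖S‖ * (Cρ * η) + η := by linarith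
        _ ≤ M + ‖S‖ * (Cρ * η) + η := by linarith
        _ = M + η * C' := by rw [hC']; ring
        _ = M + κ := by rw [hηC']
    -- conclude
    have hnumS : numRadius S = M := by
      rw [hnumA S]
      apply le_antisymm
      · apply csSup_le (hneA S)
        rintro r ⟨z', f', hz', hf', hfz', rfl⟩
        exact hclaim z' f' hz' hf' hfz'
      · exact le_csSup (hbddA S) ⟨u₀, xs i, hu₀n, hxs1 i, hu₀F.2, hval.symm⟩
    refine ⟨S, ⟨⟨u₀, xs i, hu₀n, hxs1 i, hu₀F.2, by rw [hval, hnumS]⟩, hScompact⟩, ?_⟩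
    have hd : dist T S = ‖S - T‖ := by rw [dist_eq_norm, norm_sub_rev]
    rw [hd]
    have hfin : lam + δ < ε := by
      have hδlt : δ < lam := by linarith
      rw [hlamdef] at hδlt ⊢
      linarith
    linarith [hSTnorm]
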